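/- Let δ' : R → R be a second derivation with δ∘δ' = δ'∘δ, and let ∇' : M → M be an additive map with ∇'(r·m) = δ'(r)·m + r·∇'(m) for all r ∈ R, m ∈ M, and with ∇∘∇' = ∇'∘∇. Assume M̄ is the direct sum of the generalized eigenspaces of ∇̄. Then every family (M_a)_{a ∈ k} of R-submodules of M such that each M_a is ∇-stable, M is the internal direct sum of the M_a, and the image of M_a in M̄ equals the generalized eigenspace of ∇̄ for the eigenvalue a, satisfies ∇'(M_a) ⊆ M_a for all a ∈ k. -/

import Mathlib

open IsLocalRing Submodule

/-- Local abbreviation for the maximal ideal. -/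
private abbrev mI (R : Type*) [CommRing R] [IsLocalRing R] : Ideal R :=
  IsLocalRing.maximalIdeal R

theorem stmt_6 {R M : Type*} [CommRing R] [IsNoetherianRing R] [IsLocalRing R]
    [IsAdicComplete (IsLocalRing.maximalIdeal R) R]
    [AddCommGroup M] [Module R M] [Module.Free R M] [Module.Finite R M]
    (δ : R → R)
    (hδadd : ∀ r s : R, δ (r + s) = δ r + δ s)
    (hδmul : ∀ r s : R, δ (r * s) = r * δ s + s * δ r)
    (hδR : ∀ r : R, δ r ∈ IsLocalRing.maximalIdeal R)
    (hδm : ∀ r ∈ IsLocalRing.maximalIdeal R, δ r ∈ IsLocalRing.maximalIdeal R ^ 2)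
    (nb : M → M)
    (hnbadd : ∀ m m' : M, nb (m + m') = nb m + nb m')
    (hnbLeib : ∀ (r : R) (m : M), nb (r • m) = δ r • m + r • nb m)
    (δ' : R → R)
    (hδ'add : ∀ r s : R, δ' (r + s) = δ' r + δ' s)
    (hδ'mul : ∀ r s : R, δ' (r * s) = r * δ' s + s * δ' r)
    (hδcomm : ∀ r : R, δ (δ' r) = δ' (δ r))
    (nb' : M → M)
    (hnb'add : ∀ m m' : M, nb' (m + m') = nb' m + nb' m')
    (hnb'Leib : ∀ (r : R) (m : M), nb' (r • m) = δ' r • m + r • nb' m)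
    (hcomm : ∀ m : M, nb (nb' m) = nb' (nb m))
    (nbar : (M ⧸ (IsLocalRing.maximalIdeal R • ⊤ : Submodule R M)) →ₗ[R]
        M ⧸ (IsLocalRing.maximalIdeal R • ⊤ : Submodule R M))
    (hnbar : ∀ m : M,
      nbar (Submodule.mkQ (IsLocalRing.maximalIdeal R • ⊤ : Submodule R M) m)
        = Submodule.mkQ (IsLocalRing.maximalIdeal R • ⊤ : Submodule R M) (nb m))
    (hsplit : (⨆ α : R, ⨆ n : ℕ,
        LinearMap.ker ((nbar - α • LinearMap.id) ^ n)) = ⊤) :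
    ∀ E : IsLocalRing.ResidueField R → Submodule R M,
      (∀ a, ∀ m ∈ E a, nb m ∈ E a) →
      ((⨆ a, E a) = ⊤ ∧ ∀ a, Disjoint (E a) (⨆ b, ⨆ _ : b ≠ a, E b)) →
      (∀ α : R,
        Submodule.map (Submodule.mkQ (IsLocalRing.maximalIdeal R • ⊤ : Submodule R M))
            (E (IsLocalRing.residue R α))
          = ⨆ n : ℕ, LinearMap.ker ((nbar - α • LinearMap.id) ^ n)) →
      ∀ a, ∀ m ∈ E a, nb' m ∈ E a := by
  classical
  intro E hstabE hDir hmap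
  obtain ⟨hsup, hind⟩ := hDir
  set q := Submodule.mkQ (IsLocalRing.maximalIdeal R • ⊤ : Submodule R M) with hqdef
  -- basic additive facts
  have hnb0 : nb 0 = 0 := by
    have h0 := hnbadd 0 0
    rw [add_zero] at h0
    exact (left_eq_add.mp h0)
  have hnb'0 : nb' 0 = 0 := by
    have h0 := hnb'add 0 0
    rw [add_zero] at h0
    exact (left_eq_add.mp h0)
  have hnbsub : ∀ x y, nb (x - y) = nb x - nb y := by
    intro x y
    have := hnbadd (x - y) y
    rw [sub_add_cancel] at this
    rw [this]; abel
  have hnb'sub : ∀ x y, nb' (x - y) = nb' x - nb' y := by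
    intro x y
    have := hnb'add (x - y) y
    rw [sub_add_cancel] at this
    rw [this]; abel
  -- the internal direct sum structure and projections
  have hInt : DirectSum.IsInternal E :=
    (DirectSum.isInternal_submodule_iff_iSupIndep_and_iSup_eq_top E).mpr
      ⟨iSupIndep_def.mpr hind, hsup⟩
  set h : (DirectSum _ fun c => E c) ≃ₗ[R] M :=
    LinearEquiv.ofBijective (DirectSum.coeLinearMap E) hInt with hhdef
  set π : IsLocalRing.ResidueField R → M → M := fun c x => ((h.symm x) c : M) with hπdef
  have hπmem : ∀ c x, π c x ∈ E c := fun c x => ((h.symm x) c).2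
  have hπsame : ∀ c x, x ∈ E c → π c x = x := by
    intro c x hx
    show ((h.symm x) c : M) = x
    rw [hInt.ofBijective_coeLinearMap_of_mem hx]
  have hπne : ∀ b c x, x ∈ E c → c ≠ b → π b x = 0 := by
    intro b c x hx hcb
    show ((h.symm x) b : M) = 0
    rw [hInt.ofBijective_coeLinearMap_of_mem_ne hcb hx]
    simp
  have hπadd : ∀ c x y, π c (x + y) = π c x + π c y := by
    intro c x y
    show ((h.symm (x + y)) c : M) = _
    rw [map_add]
    rfl
  have hπsmul : ∀ c (r : R) x, π c (r • x) = r • π c x := by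
    intro c r x
    show ((h.symm (r • x)) c : M) = _
    rw [map_smul]
    rfl
  have hπinj : ∀ x, (∀ c, π c x = 0) → x = 0 := by
    intro x hx
    have hz : h.symm x = 0 := by
      apply DFinsupp.ext
      intro c
      exact Subtype.ext (hx c)
    exact (LinearEquiv.map_eq_zero_iff h.symm).mp hz
  -- π commutes with nb
  have hπnb : ∀ c x, π c (nb x) = nb (π c x) := by
    intro c x
    have hx : x ∈ (⨆ a, E a) := by rw [hsup]; trivial
    refine Submodule.iSup_induction E (motive := fun z => π c (nb z) = nb (π c z)) hx ?_ ?_ ?_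
    · intro i y hy
      by_cases hic : i = c
      · rw [hπsame c y (hic ▸ hy), hπsame c (nb y) (hstabE c y (hic ▸ hy))]
      · rw [hπne c i y hy hic, hπne c i (nb y) (hstabE i y hy) hic, hnb0]
    · show π c (nb 0) = nb (π c 0)
      have hπ0 : π c (0 : M) = 0 := by
        have h00 := hπadd c 0 0
        rw [add_zero] at h00
        exact (left_eq_add.mp h00)
      rw [hnb0, hπ0, hnb0]
    · intro x y hx hy
      show π c (nb (x + y)) = nb (π c (x + y))
      rw [hnbadd, hπadd, hπadd, hx, hy, hnbadd]
  -- powers of the maximal ideal under δ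
  have hδS : ∀ (k : ℕ) (r : R), r ∈ mI R ^ k → δ r ∈ mI R ^ (k + 1) := by
    intro k
    induction k with
    | zero => intro r _; rw [pow_one]; exact hδR r
    | succ k ih =>
      intro r hr
      rw [pow_succ] at hr
      refine Submodule.mul_induction_on hr ?_ ?_
      · intro m hm n hn
        rw [hδmul]
        refine add_mem ?_ ?_
        · have h1 : m * δ n ∈ mI R ^ k * mI R ^ 2 := Ideal.mul_mem_mul hm (hδm n hn)
          rw [← pow_add] at h1
          exact h1
        · have h1 : n * δ m ∈ mI R * mI R ^ (k + 1) := Ideal.mul_mem_mul hn (ih m hm)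
          rw [← pow_succ'] at h1
          exact h1
      · intro x y hx hy
        rw [hδadd]
        exact add_mem hx hy
  have hδW : ∀ (k : ℕ) (r : R), r ∈ mI R ^ k → δ r ∈ mI R ^ k :=
    fun k r hr => Ideal.pow_le_pow_right (Nat.le_succ k) (hδS k r hr)
  -- the twisted operators
  set Lf : R → M → M := fun γ x => nb x - γ • x with hLfdef
  have hLadd : ∀ (γ : R) (x y : M), Lf γ (x + y) = Lf γ x + Lf γ y := by
    intro γ x y
    show nb (x + y) - γ • (x + y) = (nb x - γ • x) + (nb y - γ • y)
    rw [hnbadd, smul_add]; abel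
  have hLsmul : ∀ (γ r : R) (x : M), Lf γ (r • x) = δ r • x + r • Lf γ x := by
    intro γ r x
    show nb (r • x) - γ • r • x = δ r • x + r • (nb x - γ • x)
    rw [hnbLeib, smul_sub, smul_comm γ r x]; abel
  have hLE : ∀ (γ : R) (c) (x), x ∈ E c → Lf γ x ∈ E c := fun γ c x hx =>
    sub_mem (hstabE c x hx) (Submodule.smul_mem _ _ hx)
  have hLS : ∀ (γ : R) (k : ℕ) (c) (x), x ∈ (mI R ^ k • E c : Submodule R M) →
      Lf γ x ∈ (mI R ^ k • E c : Submodule R M) := by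
    intro γ k c x hx
    refine Submodule.smul_induction_on hx ?_ ?_
    · intro r hr y hy
      rw [hLsmul]
      exact add_mem (Submodule.smul_mem_smul (hδW k r hr) hy)
        (Submodule.smul_mem_smul hr (hLE γ c y hy))
    · intro x y hx hy
      rw [hLadd]
      exact add_mem hx hy
  have hLitadd : ∀ (γ : R) (j : ℕ) (x y : M),
      (Lf γ)^[j] (x + y) = (Lf γ)^[j] x + (Lf γ)^[j] y := by
    intro γ j
    induction j with
    | zero => intro x y; simp
    | succ j ih =>
      intro x y
      rw [Function.iterate_succ_apply', Function.iterate_succ_apply',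
        Function.iterate_succ_apply', ih, hLadd]
  have hLitE : ∀ (γ : R) (c) (j : ℕ) (x), x ∈ E c → (Lf γ)^[j] x ∈ E c := by
    intro γ c j
    induction j with
    | zero => intro x hx; simpa using hx
    | succ j ih => intro x hx; rw [Function.iterate_succ_apply']; exact hLE γ c _ (ih x hx)
  have hLitS : ∀ (γ : R) (k : ℕ) (c) (j : ℕ) (x), x ∈ (mI R ^ k • E c : Submodule R M) →
      (Lf γ)^[j] x ∈ (mI R ^ k • E c : Submodule R M) := by
    intro γ k c j
    induction j with
    | zero => intro x hx; simpa using hx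
    | succ j ih => intro x hx; rw [Function.iterate_succ_apply']; exact hLS γ k c _ (ih x hx)
  -- compatibility with the quotient map
  set G : R → Module.End R (M ⧸ (IsLocalRing.maximalIdeal R • ⊤ : Submodule R M)) :=
    fun γ => nbar - γ • LinearMap.id with hGdef
  have hqL : ∀ (γ : R) (x : M), q (Lf γ x) = G γ (q x) := by
    intro γ x
    show q (nb x - γ • x) = _
    rw [map_sub, map_smul, ← hnbar x]
    simp [hGdef, LinearMap.sub_apply, LinearMap.smul_apply, LinearMap.id_apply]
  have hqLit : ∀ (γ : R) (j : ℕ) (x : M),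
      q ((Lf γ)^[j] x) = ((G γ) ^ j) (q x) := by
    intro γ j
    induction j with
    | zero => intro x; simp
    | succ j ih =>
      intro x
      rw [Function.iterate_succ_apply', hqL, ih, pow_succ']
      simp [Module.End.mul_apply]
  -- linear projections
  set πₗ : IsLocalRing.ResidueField R → M →ₗ[R] M := fun c =>
    { toFun := π c, map_add' := hπadd c, map_smul' := hπsmul c } with hπₗdef
  have hinter : ∀ (c) (x), x ∈ E c →
      x ∈ (IsLocalRing.maximalIdeal R • ⊤ : Submodule R M) →
      x ∈ (mI R • E c : Submodule R M) := by
    intro c x hxE hxI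
    have h1 : π c x ∈ Submodule.map (πₗ c) (IsLocalRing.maximalIdeal R • ⊤ : Submodule R M) :=
      Submodule.mem_map_of_mem hxI
    rw [Submodule.map_smul''] at h1
    have h2 : (IsLocalRing.maximalIdeal R : Ideal R) • Submodule.map (πₗ c) ⊤ ≤
        (IsLocalRing.maximalIdeal R : Ideal R) • E c := by
      refine smul_mono_right _ ?_
      rintro _ ⟨y, -, rfl⟩
      exact hπmem c y
    rw [← hπsame c x hxE]
    exact h2 h1
  have hπsub : ∀ (c) (u v : M), π c (u - v) = π c u - π c v := by
    intro c u v
    have h1 := hπadd c (u - v) v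
    rw [sub_add_cancel] at h1
    rw [h1]; abel
  -- successor identities for ideal powers acting on E c
  have hSsucc : ∀ (n : ℕ) (c), (mI R ^ (n + 1) • E c : Submodule R M)
      = mI R • (mI R ^ n • E c : Submodule R M) := by
    intro n c
    rw [pow_succ', ← Ideal.smul_eq_mul, Submodule.smul_assoc]
  have hSsucc' : ∀ (n : ℕ) (c), (mI R ^ (n + 1) • E c : Submodule R M)
      = mI R ^ n • (mI R • E c : Submodule R M) := by
    intro n c
    rw [pow_succ, ← Ideal.smul_eq_mul, Submodule.smul_assoc]
  -- the key vanishing statement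
  have key : ∀ (a b : IsLocalRing.ResidueField R), b ≠ a →
      ∀ m ∈ E a, π b (nb' m) = 0 := by
    intro a b hba
    obtain ⟨α, hα⟩ := IsLocalRing.residue_surjective (R := R) a
    obtain ⟨β, hβ⟩ := IsLocalRing.residue_surjective (R := R) b
    have hu : IsUnit (α - β) := by
      rw [← IsLocalRing.notMem_maximalIdeal]
      intro hmem
      have h0 : IsLocalRing.residue R (α - β) = 0 := Ideal.Quotient.eq_zero_iff_mem.mpr hmem
      rw [map_sub, hα, hβ] at h0
      exact hba (by rwa [sub_eq_zero, eq_comm] at h0)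
    -- stabilization of the kernel filtration
    have hstab : ∀ γ : R, ∃ d : ℕ, ∀ n, d ≤ n →
        (⨆ k : ℕ, LinearMap.ker ((G γ) ^ k)) = LinearMap.ker ((G γ) ^ n) := by
      intro γ
      have hmono : Monotone fun n : ℕ => LinearMap.ker ((G γ) ^ n) := by
        intro i j hij x hx
        rw [LinearMap.mem_ker] at hx ⊢
        have hpow : (G γ) ^ j = (G γ) ^ (j - i) * (G γ) ^ i := by
          rw [← pow_add, Nat.sub_add_cancel hij]
        rw [hpow, Module.End.mul_apply, hx, map_zero]
      obtain ⟨d, hd⟩ := monotone_stabilizes_iff_noetherian.mpr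
        (inferInstance : IsNoetherian R (M ⧸ (IsLocalRing.maximalIdeal R • ⊤ : Submodule R M)))
        ⟨fun n => LinearMap.ker ((G γ) ^ n), hmono⟩
      refine ⟨d, fun n hn => le_antisymm (iSup_le fun k => ?_)
        (le_iSup (fun k : ℕ => LinearMap.ker ((G γ) ^ k)) n)⟩
      have e1 : LinearMap.ker ((G γ) ^ max k n) = LinearMap.ker ((G γ) ^ n) :=
        (hd (max k n) (hn.trans (le_max_right k n))).symm.trans (hd n hn)
      exact le_trans (hmono (le_max_left k n)) (le_of_eq e1)
    obtain ⟨da, hda⟩ := hstab α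
    obtain ⟨db, hdb⟩ := hstab β
    set D := max da db with hDdef
    have hkerA : ∀ x ∈ E a, ((G α) ^ D) (q x) = 0 := by
      intro x hx
      have h1 : q x ∈ Submodule.map q (E a) := Submodule.mem_map_of_mem hx
      have h2 : Submodule.map q (E a) = LinearMap.ker ((G α) ^ D) := by
        rw [← hα]
        exact (hmap α).trans (hda D (le_max_left da db))
      rw [h2, LinearMap.mem_ker] at h1
      exact h1
    have hkerB : ∀ x ∈ E b, ((G β) ^ D) (q x) = 0 := by
      intro x hx
      have h1 : q x ∈ Submodule.map q (E b) := Submodule.mem_map_of_mem hx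
      have h2 : Submodule.map q (E b) = LinearMap.ker ((G β) ^ D) := by
        rw [← hβ]
        exact (hmap β).trans (hdb D (le_max_right da db))
      rw [h2, LinearMap.mem_ker] at h1
      exact h1
    have hDa : ∀ x ∈ E a, (Lf α)^[D] x ∈ (mI R • E a : Submodule R M) := by
      intro x hx
      have h1 : q ((Lf α)^[D] x) = 0 := by rw [hqLit]; exact hkerA x hx
      have h2 : (Lf α)^[D] x ∈ LinearMap.ker q := LinearMap.mem_ker.mpr h1
      rw [hqdef, Submodule.ker_mkQ] at h2
      exact hinter a _ (hLitE α a D x hx) h2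
    have hDb : ∀ x ∈ E b, (Lf β)^[D] x ∈ (mI R • E b : Submodule R M) := by
      intro x hx
      have h1 : q ((Lf β)^[D] x) = 0 := by rw [hqLit]; exact hkerB x hx
      have h2 : (Lf β)^[D] x ∈ LinearMap.ker q := LinearMap.mem_ker.mpr h1
      rw [hqdef, Submodule.ker_mkQ] at h2
      exact hinter b _ (hLitE β b D x hx) h2
    -- iterates of Lf β almost commute with scalars from deep ideal powers
    have hdiff : ∀ (n : ℕ) (r : R), r ∈ mI R ^ n → ∀ y ∈ E b, ∀ j : ℕ,
        (Lf β)^[j] (r • y) - r • (Lf β)^[j] y ∈ (mI R ^ (n + 1) • E b : Submodule R M) := by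
      intro n r hr y hy j
      induction j with
      | zero => simp
      | succ j ih =>
        rw [Function.iterate_succ_apply', Function.iterate_succ_apply']
        have hA : (Lf β)^[j] (r • y)
            = r • (Lf β)^[j] y + ((Lf β)^[j] (r • y) - r • (Lf β)^[j] y) := by abel
        rw [hA, hLadd, hLsmul]
        have h1 : δ r • (Lf β)^[j] y ∈ (mI R ^ (n + 1) • E b : Submodule R M) :=
          Submodule.smul_mem_smul (hδS n r hr) (hLitE β b j y hy)
        have h2 : Lf β ((Lf β)^[j] (r • y) - r • (Lf β)^[j] y)
            ∈ (mI R ^ (n + 1) • E b : Submodule R M) := hLS β (n + 1) b _ ih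
        have h3 := add_mem h1 h2
        convert h3 using 1
        abel
    have hSC1 : ∀ (n : ℕ) (x), x ∈ (mI R ^ n • E b : Submodule R M) →
        (Lf β)^[D] x ∈ (mI R ^ (n + 1) • E b : Submodule R M) := by
      intro n x hx
      refine Submodule.smul_induction_on hx ?_ ?_
      · intro r hr y hy
        have h1 := hdiff n r hr y hy D
        have h2 : r • (Lf β)^[D] y ∈ (mI R ^ (n + 1) • E b : Submodule R M) := by
          rw [hSsucc' n b]
          exact Submodule.smul_mem_smul hr (hDb y hy)
        have h3 := add_mem h1 h2
        convert h3 using 1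
        abel
      · intro u v hu hv
        rw [hLitadd]
        exact add_mem hu hv
    -- commutator identity
    have hLL : ∀ x : M, Lf α (Lf β x) - Lf β (Lf α x) = (δ α - δ β) • x := by
      intro x
      show (nb (nb x - β • x) - α • (nb x - β • x))
          - (nb (nb x - α • x) - β • (nb x - α • x)) = (δ α - δ β) • x
      rw [hnbsub, hnbsub, hnbLeib, hnbLeib, smul_sub, smul_sub, sub_smul,
        smul_comm α β x]
      abel
    have hLC : ∀ (n j : ℕ) (x), x ∈ (mI R ^ n • E b : Submodule R M) →
        Lf α x ∈ (mI R ^ (n + 1) • E b : Submodule R M) →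
        Lf α ((Lf β)^[j] x) ∈ (mI R ^ (n + 1) • E b : Submodule R M) := by
      intro n j x hx hLx
      induction j with
      | zero => simpa using hLx
      | succ j ih =>
        rw [Function.iterate_succ_apply']
        have hz : (Lf β)^[j] x ∈ (mI R ^ n • E b : Submodule R M) := hLitS β n b j x hx
        have h1 : Lf β (Lf α ((Lf β)^[j] x)) ∈ (mI R ^ (n + 1) • E b : Submodule R M) :=
          hLS β (n + 1) b _ ih
        have h2 : (δ α - δ β) • (Lf β)^[j] x ∈ (mI R ^ (n + 1) • E b : Submodule R M) := by
          rw [hSsucc n b]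
          exact Submodule.smul_mem_smul (Ideal.sub_mem _ (hδR α) (hδR β)) hz
        have h3 := add_mem h1 h2
        have h5 : Lf α (Lf β ((Lf β)^[j] x))
            = Lf β (Lf α ((Lf β)^[j] x)) + (δ α - δ β) • (Lf β)^[j] x := by
          rw [← hLL ((Lf β)^[j] x)]; abel
        rw [h5]
        exact h3
    have hUpow : ∀ (n : ℕ) (x), x ∈ (mI R ^ n • E b : Submodule R M) →
        Lf α x ∈ (mI R ^ (n + 1) • E b : Submodule R M) → ∀ j : ℕ,
        (α - β) ^ j • x - (Lf β)^[j] x ∈ (mI R ^ (n + 1) • E b : Submodule R M) := by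
      intro n x hx hLx j
      induction j with
      | zero => simp
      | succ j ih =>
        have h1 : (α - β) • ((α - β) ^ j • x - (Lf β)^[j] x)
            ∈ (mI R ^ (n + 1) • E b : Submodule R M) := Submodule.smul_mem _ _ ih
        have h2 : Lf α ((Lf β)^[j] x) ∈ (mI R ^ (n + 1) • E b : Submodule R M) :=
          hLC n j x hx hLx
        have h3 := sub_mem h1 h2
        rw [Function.iterate_succ_apply']
        have h5 : (α - β) ^ (j + 1) • x - Lf β ((Lf β)^[j] x)
            = (α - β) • ((α - β) ^ j • x - (Lf β)^[j] x) - Lf α ((Lf β)^[j] x) := by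
          simp only [hLfdef]
          rw [smul_sub, ← mul_smul, ← pow_succ', sub_smul]
          abel
        rw [h5]
        exact h3
    have hKER : ∀ (n : ℕ) (x), x ∈ (mI R ^ n • E b : Submodule R M) →
        Lf α x ∈ (mI R ^ (n + 1) • E b : Submodule R M) →
        x ∈ (mI R ^ (n + 1) • E b : Submodule R M) := by
      intro n x hx hLx
      have h1 := hUpow n x hx hLx D
      have h2 := hSC1 n x hx
      have h3 : (α - β) ^ D • x ∈ (mI R ^ (n + 1) • E b : Submodule R M) := by
        have h4 := add_mem h1 h2
        convert h4 using 1
        abel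
      obtain ⟨v, hv⟩ := hu.pow (n := D)
      have h4 : (↑v⁻¹ : R) • ((α - β) ^ D • x) ∈ (mI R ^ (n + 1) • E b : Submodule R M) :=
        Submodule.smul_mem _ _ h3
      rwa [← hv, smul_smul, Units.inv_mul, one_smul] at h4
    have hINJ : ∀ (j n : ℕ) (x), x ∈ (mI R ^ n • E b : Submodule R M) →
        (Lf α)^[j] x ∈ (mI R ^ (n + 1) • E b : Submodule R M) →
        x ∈ (mI R ^ (n + 1) • E b : Submodule R M) := by
      intro j
      induction j with
      | zero => intro n x hx hj; simpa using hj
      | succ j ih =>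
        intro n x hx hj
        rw [Function.iterate_succ_apply] at hj
        exact hKER n x hx (ih n (Lf α x) (hLS α n b x hx) hj)
    -- the composite map x ↦ π b (nb' x)
    have hFadd : ∀ x y : M, π b (nb' (x + y)) = π b (nb' x) + π b (nb' y) := by
      intro x y; rw [hnb'add, hπadd]
    have hFσ : ∀ (r : R) (x), x ∈ E a → π b (nb' (r • x)) = r • π b (nb' x) := by
      intro r x hx
      rw [hnb'Leib, hπadd, hπsmul, hπsmul, hπne b a x hx (Ne.symm hba), smul_zero, zero_add]
    have hFL : ∀ (x), x ∈ E a → π b (nb' (Lf α x)) = Lf α (π b (nb' x)) := by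
      intro x hx
      show π b (nb' (nb x - α • x)) = nb (π b (nb' x)) - α • π b (nb' x)
      rw [hnb'sub, hnb'Leib, hπsub, hπadd, hπsmul, hπsmul,
        hπne b a x hx (Ne.symm hba), smul_zero, zero_add, ← hcomm x, hπnb]
    have hFLit : ∀ (j : ℕ) (x), x ∈ E a →
        π b (nb' ((Lf α)^[j] x)) = (Lf α)^[j] (π b (nb' x)) := by
      intro j
      induction j with
      | zero => intro x hx; simp
      | succ j ih =>
        intro x hx
        rw [Function.iterate_succ_apply', Function.iterate_succ_apply',
          hFL _ (hLitE α a j x hx), ih x hx]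
    -- main induction
    have main : ∀ (n : ℕ) (x), x ∈ E a → π b (nb' x) ∈ (mI R ^ n • E b : Submodule R M) := by
      intro n
      induction n with
      | zero =>
        intro x hx
        have h0 : (mI R ^ 0 • E b : Submodule R M) = E b := by
          rw [pow_zero, Ideal.one_eq_top, Submodule.top_smul]
        rw [h0]
        exact hπmem b (nb' x)
      | succ n ih =>
        intro x hx
        have hsmall : π b (nb' ((Lf α)^[D] x)) ∈ (mI R ^ (n + 1) • E b : Submodule R M) := by
          refine Submodule.smul_induction_on (hDa x hx) ?_ ?_
          · intro r hr y hy
            rw [hFσ r y hy, hSsucc n b]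
            exact Submodule.smul_mem_smul hr (ih y hy)
          · intro u v hu hv
            rw [hFadd]
            exact add_mem hu hv
        rw [hFLit D x hx] at hsmall
        exact hINJ D n _ (ih x hx) hsmall
    intro m hm
    have hall : ∀ n : ℕ, π b (nb' m) ∈ (IsLocalRing.maximalIdeal R ^ n • ⊤ : Submodule R M) :=
      fun n => (smul_mono_right _ le_top : _ ≤ (IsLocalRing.maximalIdeal R ^ n • ⊤ : Submodule R M)) (main n m hm)
    set bR := Module.Free.chooseBasis R M with hbRdef
    have hrep : ∀ (n : ℕ) (z : M), z ∈ (IsLocalRing.maximalIdeal R ^ n • ⊤ : Submodule R M) →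
        ∀ i, bR.repr z i ∈ IsLocalRing.maximalIdeal R ^ n := by
      intro n z hz i
      refine Submodule.smul_induction_on hz ?_ ?_
      · intro r hr y _
        rw [map_smul, Finsupp.smul_apply, smul_eq_mul]
        exact Ideal.mul_mem_right _ _ hr
      · intro u v hu hv
        rw [map_add, Finsupp.add_apply]
        exact add_mem hu hv
    have hcoord : ∀ i, bR.repr (π b (nb' m)) i = 0 := by
      intro i
      have hH : IsHausdorff (IsLocalRing.maximalIdeal R) R := inferInstance
      refine hH.haus _ ?_
      intro n
      rw [SModEq.zero]
      have hin := hrep n _ (hall n) i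
      have hmem1 : bR.repr (π b (nb' m)) i • (1 : R) ∈
          (IsLocalRing.maximalIdeal R ^ n • ⊤ : Submodule R R) :=
        Submodule.smul_mem_smul hin trivial
      simpa using hmem1
    have hz0 : bR.repr (π b (nb' m)) = 0 := Finsupp.ext hcoord
    exact (LinearEquiv.map_eq_zero_iff bR.repr).mp hz0
  -- conclude
  intro a m hm
  have hz : nb' m - π a (nb' m) = 0 := by
    apply hπinj
    intro c
    by_cases hc : c = a
    · subst hc
      rw [hπsub, hπsame c (π c (nb' m)) (hπmem c (nb' m)), sub_self]
    · rw [hπsub, key a c (hc) m hm, hπne c a (π a (nb' m)) (hπmem a (nb' m)) (Ne.symm (Ne.intro hc)), sub_self]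
  have : nb' m = π a (nb' m) := by
    have := sub_eq_zero.mp hz
    exact this
  rw [this]
  exact hπmem a (nb' m)
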